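/- Let A be a singular irreducible M-matrix with Au = 0 for u > 0, let w ≥ 0 with uᵀw = 1, Q = σuwᵀ with σ ∈ ℝ \ {2}, and set Ŵ₀ = A − I + Q, Ẑ₀ = 2(A + I) − Q. Then the eigenvalues of Ẑ₀^{-1}Ŵ₀ coincide with those of Z₀^{-1}W₀ = (2(A+I))^{-1}(A−I), except the eigenvalue −1/2 is replaced by (σ−1)/(2−σ). In particular, if σ ∈ (0, 4/3), then all eigenvalues of Ẑ₀^{-1}Ŵ₀ have modulus less than 1/2 on the real line that formerly equaled −1/2, since |(σ−1)/(2−σ)| < 1/2. -/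

import Mathlib

open Matrix

noncomputable def toC {n : ℕ} (A : Matrix (Fin n) (Fin n) ℝ) : Matrix (Fin n) (Fin n) ℂ :=
  A.map (fun x => (x : ℂ))

def IsEig {n : ℕ} (A : Matrix (Fin n) (Fin n) ℂ) (μ : ℂ) : Prop :=
  ∃ v : Fin n → ℂ, v ≠ 0 ∧ A *ᵥ v = μ • v

noncomputable def specRad {n : ℕ} (B : Matrix (Fin n) (Fin n) ℝ) : ℝ :=
  sSup {r : ℝ | ∃ μ : ℂ, IsEig (toC B) μ ∧ r = ‖μ‖}

def IsMmat {n : ℕ} (A : Matrix (Fin n) (Fin n) ℝ) : Prop :=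
  ∃ (α : ℝ) (B : Matrix (Fin n) (Fin n) ℝ),
    (∀ i j, 0 ≤ B i j) ∧ specRad B ≤ α ∧ A = α • (1 : Matrix (Fin n) (Fin n) ℝ) - B

def permMat {n : ℕ} (σ : Equiv.Perm (Fin n)) : Matrix (Fin n) (Fin n) ℝ :=
  fun i j => if σ j = i then 1 else 0

def BlockUTR {n : ℕ} (k : ℕ) (B : Matrix (Fin n) (Fin n) ℝ) : Prop :=
  ∀ i j : Fin n, (j : ℕ) < k → k ≤ (i : ℕ) → B i j = 0

/-- A is irreducible: no symmetric permutation puts A in nontrivial block triangular form. -/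
def IsIrred {n : ℕ} (A : Matrix (Fin n) (Fin n) ℝ) : Prop :=
  ¬ ∃ (σ : Equiv.Perm (Fin n)) (k : ℕ), 0 < k ∧ k < n ∧
      BlockUTR k ((permMat σ)ᵀ * A * permMat σ)

open Polynomial

lemma eig_abs_le {n : ℕ} (M : Matrix (Fin n) (Fin n) ℂ) {μ : ℂ} (h : IsEig M μ) :
    ‖μ‖ ≤ ∑ i, ∑ j, ‖M i j‖ := by
  obtain ⟨v, hv, hMv⟩ := h
  have hn : Nonempty (Fin n) := by
    rcases Nat.eq_zero_or_pos n with h0 | h0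
    · subst h0
      exact absurd (_root_.funext fun j : Fin 0 => j.elim0) hv
    · exact ⟨⟨0, h0⟩⟩
  obtain ⟨i, -, hi⟩ := Finset.exists_max_image Finset.univ (fun i => ‖v i‖)
    ⟨Classical.arbitrary (Fin n), Finset.mem_univ _⟩
  have hvi : 0 < ‖v i‖ := by
    rcases eq_or_lt_of_le (norm_nonneg (v i)) with h1 | h1
    · exfalso; apply hv; funext j
      have := hi j (Finset.mem_univ j)
      have : ‖v j‖ = 0 := le_antisymm (by rw [← h1] at this; exact this)
        (norm_nonneg _)
      simpa using this
    · exact h1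
  have hrow : ‖μ‖ * ‖v i‖ ≤ (∑ j, ‖M i j‖) * ‖v i‖ := by
    calc ‖μ‖ * ‖v i‖ = ‖(M *ᵥ v) i‖ := by
          rw [hMv]; simp [Pi.smul_apply, smul_eq_mul, norm_mul]
      _ ≤ ∑ j, ‖M i j * v j‖ := by
          simpa [Matrix.mulVec, dotProduct] using
            norm_sum_le Finset.univ (fun j => M i j * v j)
      _ ≤ ∑ j, ‖M i j‖ * ‖v i‖ := by
          apply Finset.sum_le_sum
          intro j _
          rw [norm_mul]
          exact mul_le_mul_of_nonneg_left (hi j (Finset.mem_univ j)) (norm_nonneg _)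
      _ = (∑ j, ‖M i j‖) * ‖v i‖ := by rw [Finset.sum_mul]
  have h1 : ‖μ‖ ≤ ∑ j, ‖M i j‖ := le_of_mul_le_mul_right hrow hvi
  refine h1.trans ?_
  exact Finset.single_le_sum (f := fun i => ∑ j, ‖M i j‖)
    (fun i _ => Finset.sum_nonneg fun j _ => norm_nonneg _) (Finset.mem_univ i)

lemma abs_le_specRad {n : ℕ} (B : Matrix (Fin n) (Fin n) ℝ) {μ : ℂ}
    (h : IsEig (toC B) μ) : ‖μ‖ ≤ specRad B := by
  apply le_csSup
  · exact ⟨∑ i, ∑ j, ‖(toC B) i j‖, fun r ⟨ν, hν, hr⟩ => hr ▸ eig_abs_le _ hν⟩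
  · exact ⟨μ, h, rfl⟩

lemma toC_eig {n : ℕ} (M : Matrix (Fin n) (Fin n) ℝ) {μ : ℝ} (h : (M - μ • 1).det = 0) :
    IsEig (toC M) μ := by
  have hdet : (toC (M - μ • 1)).det = 0 := by
    have := RingHom.map_det Complex.ofRealHom (M - μ • 1)
    rw [h] at this
    rw [map_zero] at this; exact this.symm
  obtain ⟨v, hv, hMv⟩ := (Matrix.exists_mulVec_eq_zero_iff).mpr hdet
  refine ⟨v, hv, ?_⟩
  have hsplit : toC (M - μ • 1) = toC M - (μ : ℂ) • 1 := by
    ext i j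
    simp [toC, Matrix.map_apply, Matrix.sub_apply, Matrix.smul_apply, Matrix.one_apply,
      apply_ite Complex.ofReal]
  rw [hsplit, Matrix.sub_mulVec, sub_eq_zero, Matrix.smul_mulVec, Matrix.one_mulVec] at hMv
  exact hMv

lemma det_add_one_ne_zero {n : ℕ} (A : Matrix (Fin n) (Fin n) ℝ) (hA : IsMmat A)
    (hsing : ¬ IsUnit A) : (A + 1).det ≠ 0 := by
  obtain ⟨α, B, hB, hrad, hAeq⟩ := hA
  have hdetA : A.det = 0 := by
    by_contra h
    exact hsing ((Matrix.isUnit_iff_isUnit_det A).mpr (isUnit_iff_ne_zero.mpr h))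
  -- α is an eigenvalue of B
  have hBα : IsEig (toC B) α := by
    apply toC_eig
    have : B - α • 1 = -A := by rw [hAeq]; ext i j; simp
    rw [this, det_neg, hdetA, mul_zero]
  have hα : 0 ≤ α := by
    have h1 := (abs_le_specRad B hBα).trans hrad
    rw [Complex.norm_real, Real.norm_eq_abs] at h1
    linarith [abs_nonneg α]
  intro hdet1
  have hBα1 : IsEig (toC B) (α + 1 : ℝ) := by
    apply toC_eig
    have : B - (α + 1) • 1 = -(A + 1) := by rw [hAeq]; ext i j; simp [Matrix.one_apply]; split <;> ring
    rw [this, det_neg, hdet1, mul_zero]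
  have h2 := (abs_le_specRad B hBα1).trans hrad
  rw [Complex.norm_real, Real.norm_eq_abs] at h2
  have : |α + 1| = α + 1 := abs_of_nonneg (by linarith)
  linarith [this ▸ h2]

lemma mul_vecMulVec' {n : ℕ} {R : Type*} [CommRing R] (M : Matrix (Fin n) (Fin n) R)
    (x y : Fin n → R) : M * vecMulVec x y = vecMulVec (M *ᵥ x) y := by
  ext i j
  simp [Matrix.mul_apply, vecMulVec_apply, Matrix.mulVec, dotProduct, Finset.sum_mul, mul_assoc]

lemma smul_vecMulVec' {n : ℕ} {R : Type*} [CommRing R] (c : R)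
    (x y : Fin n → R) : c • vecMulVec x y = vecMulVec (c • x) y := by
  ext i j
  simp [vecMulVec_apply, mul_assoc]

lemma det_one_sub_vecMulVec' {n : ℕ} {R : Type*} [CommRing R]
    (x y : Fin n → R) : (1 - vecMulVec x y).det = 1 - y ⬝ᵥ x := by
  have h1 : (1 : Matrix (Fin n) (Fin n) R) - vecMulVec x y = 1 + vecMulVec (-x) y := by
    ext i j; simp [vecMulVec_apply]; ring
  rw [h1, vecMulVec_eq (Fin 1), det_one_add_replicateCol_mul_replicateRow, dotProduct_neg, ← sub_eq_add_neg]

lemma det_sub_smul_vecMulVec' {n : ℕ} {M : Matrix (Fin n) (Fin n) ℝ} {u w : Fin n → ℝ}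
    {d c : ℝ} (hM : M.det ≠ 0) (hd : d ≠ 0) (hMu : M *ᵥ u = d • u) :
    (M - c • vecMulVec u w).det = M.det * (1 - c * (w ⬝ᵥ u) / d) := by
  have hMd : IsUnit M.det := isUnit_iff_ne_zero.mpr hM
  have hMcu : M *ᵥ ((c * d⁻¹) • u) = c • u := by
    rw [Matrix.mulVec_smul, hMu, smul_smul, mul_assoc, inv_mul_cancel₀ hd, mul_one]
  have key : M - c • vecMulVec u w = M * (1 - vecMulVec ((c * d⁻¹) • u) w) := by
    rw [Matrix.mul_sub, Matrix.mul_one, mul_vecMulVec', hMcu, smul_vecMulVec']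
  rw [key, det_mul, det_one_sub_vecMulVec']
  congr 1
  rw [dotProduct_smul, smul_eq_mul]
  ring

lemma charpoly_mul_detC' {n : ℕ} (M N : Matrix (Fin n) (Fin n) ℝ) (hM : M.det ≠ 0) :
    (M⁻¹ * N).charpoly * C M.det = ((X : ℝ[X]) • M.map C - N.map C).det := by
  have hMd : IsUnit M.det := isUnit_iff_ne_zero.mpr hM
  have h1 : M.map (C : ℝ → ℝ[X]) * charmatrix (M⁻¹ * N) = (X : ℝ[X]) • M.map C - N.map C := by
    rw [charmatrix]
    rw [Matrix.mul_sub]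
    congr 1
    · rw [Matrix.scalar_apply, ← Matrix.smul_one_eq_diagonal, mul_smul_comm, Matrix.mul_one]
    · rw [RingHom.mapMatrix_apply, ← RingHom.mapMatrix_apply, ← RingHom.mapMatrix_apply,
        ← _root_.map_mul, ← Matrix.mul_assoc, Matrix.mul_nonsing_inv M hMd, Matrix.one_mul,
        RingHom.mapMatrix_apply]
  have h2 : C M.det = (M.map (C : ℝ → ℝ[X])).det := RingHom.map_det C M
  rw [Matrix.charpoly, h2, mul_comm, ← det_mul, h1]

lemma eval_detX' {n : ℕ} (M N : Matrix (Fin n) (Fin n) ℝ) (lam : ℝ) :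
    eval lam (((X : ℝ[X]) • M.map C - N.map C).det) = (lam • M - N).det := by
  have := RingHom.map_det (evalRingHom lam) ((X : ℝ[X]) • M.map C - N.map C)
  rw [show (evalRingHom lam) (((X : ℝ[X]) • M.map C - N.map C).det)
      = eval lam (((X : ℝ[X]) • M.map C - N.map C).det) from rfl] at this
  rw [this]
  congr 1
  ext i j
  simp only [RingHom.mapMatrix_apply, Matrix.map_apply, Matrix.sub_apply, Matrix.smul_apply,
    smul_eq_mul, eval_sub, eval_mul, eval_X, eval_C, coe_evalRingHom]

private theorem stmt13_aux {n : ℕ} (A : Matrix (Fin n) (Fin n) ℝ)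
    (u w : Fin n → ℝ) (hAu : A *ᵥ u = 0)
    (huw : u ⬝ᵥ w = 1)
    (σ : ℝ) (hσ : σ ≠ 2)
    (hdetA1 : (A + 1).det ≠ 0) :
    (((2 • (A + 1) - σ • vecMulVec u w)⁻¹ * (A - 1 + σ • vecMulVec u w)).charpoly *
        (Polynomial.X + Polynomial.C ((1 : ℝ)/2)) =
      (((2 : ℝ) • (A + 1))⁻¹ * (A - 1)).charpoly *
        (Polynomial.X - Polynomial.C ((σ - 1)/(2 - σ)))) := by
  set Z : Matrix (Fin n) (Fin n) ℝ := (2 : ℝ) • (A + 1) with hZ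
  set W : Matrix (Fin n) (Fin n) ℝ := A - 1 with hW
  set Q : Matrix (Fin n) (Fin n) ℝ := σ • vecMulVec u w with hQ
  have h2σ : (2:ℝ) - σ ≠ 0 := sub_ne_zero.mpr (Ne.symm hσ)
  have hwu : w ⬝ᵥ u = 1 := by rw [dotProduct_comm]; exact huw
  have hdetZ : Z.det ≠ 0 := by
    rw [hZ, det_smul]
    exact mul_ne_zero (pow_ne_zero _ two_ne_zero) hdetA1
  have hZu : Z *ᵥ u = (2:ℝ) • u := by
    rw [hZ, Matrix.smul_mulVec, Matrix.add_mulVec, hAu, Matrix.one_mulVec, zero_add]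
  have hdetZQ : (Z - Q).det = Z.det * ((2 - σ)/2) := by
    rw [hQ, det_sub_smul_vecMulVec' hdetZ two_ne_zero hZu, hwu]
    ring
  have hdetZQ' : (Z - Q).det ≠ 0 := by
    rw [hdetZQ]
    exact mul_ne_zero hdetZ (div_ne_zero h2σ two_ne_zero)
  -- polynomials
  set P : ℝ[X] := ((X : ℝ[X]) • (Z - Q).map C - (W + Q).map C).det with hP
  set Pz : ℝ[X] := ((X : ℝ[X]) • Z.map C - W.map C).det with hPzd
  have e1 : ((Z - Q)⁻¹ * (W + Q)).charpoly * C ((Z - Q).det) = P :=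
    charpoly_mul_detC' _ _ hdetZQ'
  have e2 : (Z⁻¹ * W).charpoly * C Z.det = Pz := charpoly_mul_detC' _ _ hdetZ
  have hPz_ne : Pz ≠ 0 := by
    rw [← e2]
    exact mul_ne_zero (Matrix.charpoly_monic _).ne_zero (fun h => hdetZ (by simpa using h))
  have hkey : P * (C 2 * X + 1) = Pz * (C (2 - σ) * X + C (1 - σ)) := by
    apply Polynomial.eq_of_infinite_eval_eq
    apply Set.Infinite.mono (s := ({x | IsRoot Pz x} ∪ {-(1:ℝ)/2})ᶜ)
    swap
    · apply Set.Finite.infinite_compl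
      exact (Polynomial.finite_setOf_isRoot hPz_ne).union (Set.finite_singleton _)
    intro lam hlam
    simp only [Set.mem_compl_iff, Set.mem_union, Set.mem_setOf_eq, Set.mem_singleton_iff,
      not_or] at hlam
    obtain ⟨h1, h2⟩ := hlam
    have hdetM : (lam • Z - W).det ≠ 0 := by
      rw [← eval_detX']; exact h1
    have h2l : 2*lam + 1 ≠ 0 := by
      intro h; apply h2; linarith
    have hMu : (lam • Z - W) *ᵥ u = (2*lam+1) • u := by
      rw [Matrix.sub_mulVec, Matrix.smul_mulVec, hZu, hW, Matrix.sub_mulVec, hAu,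
        Matrix.one_mulVec]
      funext i
      simp [smul_eq_mul]
      ring
    have hmat : lam • (Z - Q) - (W + Q) = (lam • Z - W) - ((lam+1)*σ) • vecMulVec u w := by
      rw [hQ]
      ext i j
      simp [Matrix.sub_apply, Matrix.add_apply, Matrix.smul_apply, vecMulVec_apply, smul_eq_mul]
      ring
    show eval lam (P * (C 2 * X + 1)) = eval lam (Pz * (C (2 - σ) * X + C (1 - σ)))
    simp only [eval_mul, eval_add, eval_one, eval_C, eval_X, hP, hPzd]
    rw [eval_detX', eval_detX', hmat, det_sub_smul_vecMulVec' hdetM h2l hMu, hwu]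
    have hx : (1 - (lam + 1) * σ * 1 / (2 * lam + 1)) * (2 * lam + 1)
        = (2 - σ) * lam + (1 - σ) := by
      rw [sub_mul, div_mul_cancel₀ _ h2l]
      ring
    linear_combination ((lam • Z - W).det) * hx
  -- final assembly
  have hc : C (2 - σ) * ((X : ℝ[X]) - C ((σ-1)/(2-σ))) = C (2-σ) * X + C (1 - σ) := by
    rw [mul_sub, ← C_mul, show (2-σ) * ((σ-1)/(2-σ)) = σ - 1 from by field_simp,
      show (σ - 1 : ℝ) = -(1 - σ) from by ring, C_neg, sub_neg_eq_add]
  have h2' : ((X:ℝ[X]) + C ((1:ℝ)/2)) * C 2 = C 2 * X + 1 := by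
    rw [add_mul, ← C_mul]
    norm_num
  have hcancel : (C ((Z - Q).det) * (C Z.det * C 2) : ℝ[X]) ≠ 0 := by
    simp only [← C_mul]
    rw [C_ne_zero]
    exact mul_ne_zero hdetZQ' (mul_ne_zero hdetZ two_ne_zero)
  have h2s : (2 • (A + 1) : Matrix (Fin n) (Fin n) ℝ) = Z := by
    rw [hZ]; ext i j; simp; ring
  rw [h2s]
  apply mul_right_cancel₀ hcancel
  calc ((Z - Q)⁻¹ * (W + Q)).charpoly * (X + C ((1:ℝ)/2)) * (C ((Z - Q).det) * (C Z.det * C 2))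
      = (((Z - Q)⁻¹ * (W + Q)).charpoly * C ((Z - Q).det)) * (((X:ℝ[X]) + C ((1:ℝ)/2)) * C 2)
          * C Z.det := by ring
    _ = P * (C 2 * X + 1) * C Z.det := by rw [e1, h2']
    _ = Pz * (C (2 - σ) * X + C (1 - σ)) * C Z.det := by rw [hkey]
    _ = ((Z⁻¹ * W).charpoly * C Z.det) * (C (2 - σ) * ((X : ℝ[X]) - C ((σ-1)/(2-σ))))
          * C Z.det := by rw [e2, hc]
    _ = (Z⁻¹ * W).charpoly * (X - C ((σ-1)/(2-σ))) * (C ((2 - σ) * Z.det) * C Z.det) := by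
          rw [C_mul]; ring
    _ = (Z⁻¹ * W).charpoly * (X - C ((σ-1)/(2-σ))) * (C ((Z - Q).det) * (C Z.det * C 2)) := by
          congr 1
          rw [← C_mul, ← C_mul, ← C_mul]
          exact congrArg C (by rw [hdetZQ]; ring)


/-- Shift technique for CR: the eigenvalues of Ẑ₀⁻¹Ŵ₀ are those of Z₀⁻¹W₀ except that
-1/2 is replaced by (σ-1)/(2-σ), expressed as an identity of characteristic polynomials;
moreover if σ ∈ (0, 4/3) then |(σ-1)/(2-σ)| < 1/2. -/
theorem stmt13 {n : ℕ} (A : Matrix (Fin n) (Fin n) ℝ) (hA : IsMmat A)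
    (hsing : ¬ IsUnit A) (hirr : IsIrred A)
    (u w : Fin n → ℝ) (hu : ∀ i, 0 < u i) (hAu : A *ᵥ u = 0)
    (hw : ∀ i, 0 ≤ w i) (huw : u ⬝ᵥ w = 1)
    (σ : ℝ) (hσ : σ ≠ 2) :
    (((2 • (A + 1) - σ • vecMulVec u w)⁻¹ * (A - 1 + σ • vecMulVec u w)).charpoly *
        (Polynomial.X + Polynomial.C ((1 : ℝ)/2)) =
      (((2 : ℝ) • (A + 1))⁻¹ * (A - 1)).charpoly *
        (Polynomial.X - Polynomial.C ((σ - 1)/(2 - σ)))) ∧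
    (0 < σ → σ < 4/3 → |(σ - 1)/(2 - σ)| < 1/2) := by
  constructor
  · exact stmt13_aux A u w hAu huw σ hσ (det_add_one_ne_zero A hA hsing)
  · intro h1 h2
    have h3 : 0 < 2 - σ := by linarith
    rw [abs_div, abs_of_pos h3, div_lt_iff₀ h3, abs_lt]
    constructor <;> linarith
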